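/- Let S^{ab} = S^{ba}, γ^a, θ be smooth functions on ℝⁿ and Δ_w the associated canonical pencil. Then the pencil generates the weight-zero bracket on the algebra of densities determined by the extended symbol matrix (S^{ab}, γ^a, θ): for all weights u, v ∈ ℝ and all smooth functions ψ, χ on ℝⁿ (regarded as components of densities of weights u and v), Δ_{u+v}(ψ·χ) − (Δ_u ψ)·χ − ψ·(Δ_v χ) = Σ_{a,b} S^{ab} (∂_b ψ)(∂_a χ) + Σ_a γ^a ( v·(∂_a ψ)·χ + u·ψ·(∂_a χ) ) + u·v·θ·ψ·χ. -/

import Mathlib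

open scoped BigOperators

/-- Partial derivative `∂_a f` of a function on `ℝⁿ`. -/
noncomputable def pd {n : ℕ} (a : Fin n) (f : (Fin n → ℝ) → ℝ) : (Fin n → ℝ) → ℝ :=
  fun x => fderiv ℝ f x (Pi.single a 1)

/-- The canonical pencil of operators associated to data `(S^{ab}, γ^a, θ)`:
`Δ_w f = (1/2)·(Σ_{a,b} S^{ab} ∂_a∂_b f + Σ_a (Σ_b ∂_b S^{ba} + (2w−1)γ^a) ∂_a f
  + (w·Σ_a ∂_a γ^a + w(w−1)·θ)·f)`. -/
noncomputable def canonicalPencil {n : ℕ} (S : Fin n → Fin n → (Fin n → ℝ) → ℝ)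
    (γ : Fin n → (Fin n → ℝ) → ℝ) (θ : (Fin n → ℝ) → ℝ) (w : ℝ)
    (f : (Fin n → ℝ) → ℝ) : (Fin n → ℝ) → ℝ :=
  fun x => (1/2) * ((∑ a, ∑ b, S a b x * pd a (pd b f) x)
    + (∑ a, ((∑ b, pd b (S b a) x) + (2 * w - 1) * γ a x) * pd a f x)
    + (w * (∑ a, pd a (γ a) x) + w * (w - 1) * θ x) * f x)

lemma contDiff_pd {n : ℕ} (a : Fin n) {f : (Fin n → ℝ) → ℝ}
    (hf : ContDiff ℝ (⊤ : ℕ∞) f) : ContDiff ℝ (⊤ : ℕ∞) (pd a f) := by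
  unfold pd
  exact (hf.fderiv_right (by exact_mod_cast le_top)).clm_apply contDiff_const

lemma pd_mul {n : ℕ} (a : Fin n) {f g : (Fin n → ℝ) → ℝ}
    (hf : ContDiff ℝ (⊤ : ℕ∞) f) (hg : ContDiff ℝ (⊤ : ℕ∞) g) (y : Fin n → ℝ) :
    pd a (fun z => f z * g z) y = pd a f y * g y + f y * pd a g y := by
  unfold pd
  rw [fderiv_fun_mul ((hf.differentiable (by simp)).differentiableAt)
      ((hg.differentiable (by simp)).differentiableAt)]
  simp [ContinuousLinearMap.add_apply, ContinuousLinearMap.smul_apply, smul_eq_mul]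
  ring

lemma pd_add {n : ℕ} (a : Fin n) {f g : (Fin n → ℝ) → ℝ}
    (hf : ContDiff ℝ (⊤ : ℕ∞) f) (hg : ContDiff ℝ (⊤ : ℕ∞) g) (y : Fin n → ℝ) :
    pd a (fun z => f z + g z) y = pd a f y + pd a g y := by
  unfold pd
  rw [fderiv_fun_add ((hf.differentiable (by simp)).differentiableAt)
      ((hg.differentiable (by simp)).differentiableAt)]
  simp

/-- the canonical pencil generates the weight-zero bracket on the algebra
of densities determined by the extended symbol `(S^{ab}, γ^a, θ)`: for densities of
weights `u, v` with smooth components `ψ, χ`,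
`Δ_{u+v}(ψχ) − (Δ_u ψ)χ − ψ(Δ_v χ)
  = Σ_{a,b} S^{ab} ∂_bψ ∂_aχ + Σ_a γ^a (v·∂_aψ·χ + u·ψ·∂_aχ) + u·v·θ·ψ·χ`. -/
theorem canonicalPencil_generates_density_bracket {n : ℕ}
    (S : Fin n → Fin n → (Fin n → ℝ) → ℝ)
    (γ : Fin n → (Fin n → ℝ) → ℝ) (θ : (Fin n → ℝ) → ℝ)
    (hS : ∀ a b, ContDiff ℝ (⊤ : ℕ∞) (S a b)) (hSsym : ∀ a b, S a b = S b a)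
    (hγ : ∀ a, ContDiff ℝ (⊤ : ℕ∞) (γ a)) (hθ : ContDiff ℝ (⊤ : ℕ∞) θ)
    (u v : ℝ) (ψ χ : (Fin n → ℝ) → ℝ)
    (hψ : ContDiff ℝ (⊤ : ℕ∞) ψ) (hχ : ContDiff ℝ (⊤ : ℕ∞) χ) (x : Fin n → ℝ) :
    canonicalPencil S γ θ (u + v) (fun y => ψ y * χ y) x
      - canonicalPencil S γ θ u ψ x * χ x - ψ x * canonicalPencil S γ θ v χ x
    = (∑ a, ∑ b, S a b x * pd b ψ x * pd a χ x)
      + (∑ a, γ a x * (v * pd a ψ x * χ x + u * ψ x * pd a χ x))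
      + u * v * θ x * ψ x * χ x := by
  -- second derivatives of the product
  have key2 : ∀ a b : Fin n, pd a (pd b (fun y => ψ y * χ y)) x
      = pd a (pd b ψ) x * χ x + pd b ψ x * pd a χ x
        + pd a ψ x * pd b χ x + ψ x * pd a (pd b χ) x := by
    intro a b
    have hbφ : pd b (fun y => ψ y * χ y)
        = fun y => pd b ψ y * χ y + ψ y * pd b χ y := funext (pd_mul b hψ hχ)
    calc pd a (pd b (fun y => ψ y * χ y)) x
        = pd a (fun y => pd b ψ y * χ y + ψ y * pd b χ y) x := by rw [hbφ]
      _ = pd a (fun y => pd b ψ y * χ y) x + pd a (fun y => ψ y * pd b χ y) x :=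
          pd_add a ((contDiff_pd b hψ).mul hχ) (hψ.mul (contDiff_pd b hχ)) x
      _ = _ := by
          rw [pd_mul a (contDiff_pd b hψ) hχ, pd_mul a hψ (contDiff_pd b hχ)]; ring
  -- first derivatives of the product (at x)
  have key1 : ∀ a : Fin n, pd a (fun y => ψ y * χ y) x
      = pd a ψ x * χ x + ψ x * pd a χ x := fun a => pd_mul a hψ hχ x
  -- E1: the second-order sum
  have swap : (∑ a, ∑ b, S a b x * (pd a ψ x * pd b χ x))
      = ∑ a, ∑ b, S a b x * pd b ψ x * pd a χ x := by
    rw [Finset.sum_comm]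
    refine Finset.sum_congr rfl fun a _ => Finset.sum_congr rfl fun b _ => ?_
    rw [hSsym]; ring
  have E1 : (∑ a, ∑ b, S a b x * pd a (pd b (fun y => ψ y * χ y)) x)
      = (∑ a, ∑ b, S a b x * pd a (pd b ψ) x) * χ x
        + 2 * (∑ a, ∑ b, S a b x * pd b ψ x * pd a χ x)
        + ψ x * (∑ a, ∑ b, S a b x * pd a (pd b χ) x) := by
    calc (∑ a, ∑ b, S a b x * pd a (pd b (fun y => ψ y * χ y)) x)
        = ∑ a, ∑ b, (S a b x * pd a (pd b ψ) x * χ x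
            + S a b x * pd b ψ x * pd a χ x
            + S a b x * (pd a ψ x * pd b χ x)
            + ψ x * (S a b x * pd a (pd b χ) x)) := by
          refine Finset.sum_congr rfl fun a _ => Finset.sum_congr rfl fun b _ => ?_
          rw [key2 a b]; ring
      _ = (∑ a, ∑ b, S a b x * pd a (pd b ψ) x) * χ x
            + (∑ a, ∑ b, S a b x * pd b ψ x * pd a χ x)
            + (∑ a, ∑ b, S a b x * (pd a ψ x * pd b χ x))
            + ψ x * (∑ a, ∑ b, S a b x * pd a (pd b χ) x) := by
          simp only [Finset.sum_add_distrib, Finset.sum_mul, Finset.mul_sum]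
      _ = _ := by rw [swap]; ring
  -- F: the first-order sum for a single function
  have F : ∀ (c : ℝ) (f : (Fin n → ℝ) → ℝ),
      (∑ a, ((∑ b, pd b (S b a) x) + c * γ a x) * pd a f x)
      = (∑ a, (∑ b, pd b (S b a) x) * pd a f x) + c * (∑ a, γ a x * pd a f x) := by
    intro c f
    calc (∑ a, ((∑ b, pd b (S b a) x) + c * γ a x) * pd a f x)
        = ∑ a, ((∑ b, pd b (S b a) x) * pd a f x + c * (γ a x * pd a f x)) := by
          refine Finset.sum_congr rfl fun a _ => ?_; ring
      _ = _ := by rw [Finset.sum_add_distrib, ← Finset.mul_sum]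
  -- Fφ: the first-order sum for the product
  have Fphi : (∑ a, ((∑ b, pd b (S b a) x) + (2 * (u + v) - 1) * γ a x)
        * pd a (fun y => ψ y * χ y) x)
      = ((∑ a, (∑ b, pd b (S b a) x) * pd a ψ x)
          + (2 * (u + v) - 1) * (∑ a, γ a x * pd a ψ x)) * χ x
        + ψ x * ((∑ a, (∑ b, pd b (S b a) x) * pd a χ x)
          + (2 * (u + v) - 1) * (∑ a, γ a x * pd a χ x)) := by
    calc (∑ a, ((∑ b, pd b (S b a) x) + (2 * (u + v) - 1) * γ a x)
          * pd a (fun y => ψ y * χ y) x)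
        = ∑ a, ((((∑ b, pd b (S b a) x) + (2 * (u + v) - 1) * γ a x) * pd a ψ x) * χ x
            + ψ x * (((∑ b, pd b (S b a) x) + (2 * (u + v) - 1) * γ a x) * pd a χ x)) := by
          refine Finset.sum_congr rfl fun a _ => ?_
          rw [key1 a]; ring
      _ = (∑ a, ((∑ b, pd b (S b a) x) + (2 * (u + v) - 1) * γ a x) * pd a ψ x) * χ x
            + ψ x * (∑ a, ((∑ b, pd b (S b a) x) + (2 * (u + v) - 1) * γ a x) * pd a χ x) := by
          rw [Finset.sum_add_distrib, ← Finset.sum_mul, ← Finset.mul_sum]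
      _ = _ := by rw [F, F]
  -- reduce the γ-sum on the RHS
  have Ered : (∑ a, γ a x * (v * pd a ψ x * χ x + u * ψ x * pd a χ x))
      = v * (∑ a, γ a x * pd a ψ x) * χ x + u * ψ x * (∑ a, γ a x * pd a χ x) := by
    calc (∑ a, γ a x * (v * pd a ψ x * χ x + u * ψ x * pd a χ x))
        = ∑ a, ((γ a x * pd a ψ x) * (v * χ x) + (γ a x * pd a χ x) * (u * ψ x)) := by
          refine Finset.sum_congr rfl fun a _ => ?_; ring
      _ = (∑ a, γ a x * pd a ψ x) * (v * χ x) + (∑ a, γ a x * pd a χ x) * (u * ψ x) := by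
          rw [Finset.sum_add_distrib, ← Finset.sum_mul, ← Finset.sum_mul]
      _ = _ := by ring
  simp only [canonicalPencil]
  rw [E1, Fphi, F (2 * u - 1) ψ, F (2 * v - 1) χ, Ered]
  ring
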